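/- arXiv:2204.11771 — 2 statements merged into one kernel-verified Lean document; each statement's English description precedes it below -/
import Mathlib

section
/- Let M ⊆ N be models of the theory of contiguous extensional arrays (i.e., M is a substructure of N with respect to rd, wr, length, and the index structure), with functional interpretations as positive-support functions. For a, b in ARRAY^M, define a ∼_M b iff |a| = |b| in M and {i ∈ INDEX^M | rd(a,i) ≠ rd(b,i)} is finite (and similarly ∼_N using indices from N). Then a ∼_M b if and only if a ∼_N b. -/
/-- A three-sorted structure for the theory of contiguous arrays: an index sort with
an ordering and a zero, an element sort with `⊥`, an array sort with read, write and
length operations. -/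
structure ArrModel where
  Index : Type
  Elem : Type
  Arr : Type
  le : Index → Index → Prop
  zero : Index
  bot : Elem
  rd : Arr → Index → Elem
  wr : Arr → Index → Elem → Arr
  len : Arr → Index

/-- The axioms of the theory of contiguous extensional arrays. -/
structure ArrModel.IsModel (M : ArrModel) : Prop where
  le_refl : ∀ i, M.le i i
  le_trans : ∀ i j k, M.le i j → M.le j k → M.le i k
  le_antisymm : ∀ i j, M.le i j → M.le j i → i = j
  le_total : ∀ i j, M.le i j ∨ M.le j i
  len_wr : ∀ a i e, M.len (M.wr a i e) = M.len a
  wr_bot : ∀ a i, M.wr a i M.bot = a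
  rd_wr_eq : ∀ a i e, e ≠ M.bot → M.le M.zero i → M.le i (M.len a) →
    M.rd (M.wr a i e) i = e
  rd_wr_ne : ∀ a i j e, i ≠ j → M.rd (M.wr a i e) j = M.rd a j
  rd_bot : ∀ a i, M.rd a i ≠ M.bot ↔ (M.le M.zero i ∧ M.le i (M.len a))
  len_nonneg : ∀ a, M.le M.zero (M.len a)
  ext : ∀ a b, a ≠ b → ∃ i, M.rd a i ≠ M.rd b i

/-- An embedding of array structures (so its image is a substructure): injective on all
sorts, preserving and reflecting the order and preserving `0`, `⊥`, `rd`, `wr`, `len`. -/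
structure ArrModel.Emb (M N : ArrModel) where
  fi : M.Index → N.Index
  fe : M.Elem → N.Elem
  fa : M.Arr → N.Arr
  fi_inj : Function.Injective fi
  fe_inj : Function.Injective fe
  fa_inj : Function.Injective fa
  le_iff : ∀ i j, N.le (fi i) (fi j) ↔ M.le i j
  map_zero : fi M.zero = N.zero
  map_bot : fe M.bot = N.bot
  map_rd : ∀ a i, N.rd (fa a) (fi i) = fe (M.rd a i)
  map_wr : ∀ a i e, fa (M.wr a i e) = N.wr (fa a) (fi i) (fe e)
  map_len : ∀ a, N.len (fa a) = fi (M.len a)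

/-- Key lemma: if `a` and `b` agree outside a finite set `s` of `M`-indices and have
equal length, then their images agree outside the image of `s`. -/
theorem ArrModel.key (M N : ArrModel) (hM : M.IsModel) (hN : N.IsModel) (f : M.Emb N)
    (s : Finset M.Index) :
    ∀ a b : M.Arr, M.len a = M.len b → (∀ i, i ∉ s → M.rd a i = M.rd b i) →
    ∀ j : N.Index, (∀ i ∈ s, j ≠ f.fi i) → N.rd (f.fa a) j = N.rd (f.fa b) j := by
  classical
  induction s using Finset.induction with
  | empty =>
    intro a b _ h j _
    have hab : a = b := by
      by_contra hne
      obtain ⟨i, hi⟩ := hM.ext a b hne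
      exact hi (h i (Finset.notMem_empty i))
    rw [hab]
  | @insert i t hit ih =>
    intro a b hlen h j hj
    by_cases hib : M.rd a i = M.rd b i
    · refine ih a b hlen (fun k hk => ?_) j (fun m hm => hj m (Finset.mem_insert_of_mem hm))
      by_cases hki : k = i
      · exact hki ▸ hib
      · refine h k (fun hmem => ?_)
        rcases Finset.mem_insert.mp hmem with h' | h'
        exacts [hki h', hk h']
    · set e := M.rd b i with he
      have hebot : e ≠ M.bot := by
        intro hbot
        have ha : M.rd a i ≠ M.bot := fun h' => hib (h'.trans hbot.symm)
        obtain ⟨h0, hl⟩ := (hM.rd_bot a i).mp ha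
        exact ((hM.rd_bot b i).mpr ⟨h0, hlen ▸ hl⟩) hbot
      obtain ⟨h0, hl⟩ := (hM.rd_bot b i).mp hebot
      have hla : M.le i (M.len a) := hlen ▸ hl
      have hout : ∀ k, k ∉ t → M.rd (M.wr a i e) k = M.rd b k := by
        intro k hk
        by_cases hik : i = k
        · rw [← hik, hM.rd_wr_eq a i e hebot h0 hla]
        · rw [hM.rd_wr_ne a i k e hik]
          refine h k (fun hmem => ?_)
          rcases Finset.mem_insert.mp hmem with h' | h'
          exacts [hik h'.symm, hk h']
      have hstep := ih (M.wr a i e) b ((hM.len_wr a i e).trans hlen) hout j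
        (fun m hm => hj m (Finset.mem_insert_of_mem hm))
      have hji : j ≠ f.fi i := hj i (Finset.mem_insert_self i t)
      have : N.rd (f.fa (M.wr a i e)) j = N.rd (f.fa a) j := by
        rw [f.map_wr, hN.rd_wr_ne (f.fa a) (f.fi i) j (f.fe e) (fun h' => hji h'.symm)]
      rw [← this, hstep]

/-- Cardinality equivalence `∼` between arrays (equal lengths and finitely many indices
where the reads differ) is invariant when passing from a substructure `M` to a
superstructure `N` of models of the contiguous extensional array theory. -/
theorem sim_iff_sim_of_substructure (M N : ArrModel)
    (hM : M.IsModel) (hN : N.IsModel) (f : M.Emb N) (a b : M.Arr) :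
    (M.len a = M.len b ∧ {i : M.Index | M.rd a i ≠ M.rd b i}.Finite) ↔
    (N.len (f.fa a) = N.len (f.fa b) ∧
      {i : N.Index | N.rd (f.fa a) i ≠ N.rd (f.fa b) i}.Finite) := by
  classical
  constructor
  · rintro ⟨hlen, hfin⟩
    refine ⟨by rw [f.map_len, f.map_len, hlen], ?_⟩
    refine Set.Finite.subset ((hfin.toFinset.image f.fi).finite_toSet) ?_
    intro j hj
    simp only [Set.mem_setOf_eq] at hj
    by_contra hjm
    simp only [Finset.coe_image, Set.mem_image, Finset.mem_coe,
      Set.Finite.mem_toFinset, Set.mem_setOf_eq] at hjm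
    refine hj (ArrModel.key M N hM hN f hfin.toFinset a b hlen
      (fun i hi => by simpa [Set.Finite.mem_toFinset] using hi) j ?_)
    intro i hi hji
    exact hjm ⟨i, by simpa [Set.Finite.mem_toFinset] using hi, hji.symm⟩
  · rintro ⟨hlen, hfin⟩
    constructor
    · apply f.fi_inj
      rw [← f.map_len, ← f.map_len, hlen]
    · refine Set.Finite.subset (hfin.preimage (f.fi_inj.injOn)) ?_
      intro i hi
      simp only [Set.mem_preimage, Set.mem_setOf_eq] at *
      rw [f.map_rd, f.map_rd]
      exact fun h' => hi (f.fe_inj h')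
end

section
/- Let I be a linear order with 0, E a set with distinguished elements ⊥ and el (⊥ ≠ el), e ∈ E with e ∉ {⊥, el}. Let a, b : I → E be positive-support with |a| = |b| = L, let D = {i | a(i) ≠ b(i)} be infinite with no maximum, and let I' = I ∪ {k₀} be the linear order obtained by inserting a new point k₀ above ↓D and below I \ ↓D. Extend a to a' : I' → E by a'(k₀) = e and b to b' by b'(k₀) = el (and values unchanged on I). Then a', b' are positive-support in I' with the same lengths (note k₀ < L since D ⊆ [0,L]), and maxdiff(a',b') exists and equals k₀. -/
/-- `a : I → E` is a positive-support function with length `l` (relative to the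
distinguished zero `z` of `I` and the undefined value `bot`). -/
def IsPosSupportAt {I E : Type*} [LinearOrder I] (z : I) (bot : E)
    (a : I → E) (l : I) : Prop :=
  z ≤ l ∧ ∀ j, a j ≠ bot ↔ (z ≤ j ∧ j ≤ l)

/-- Inserting a point `k₀` above the downward closure of the (infinite, maximumless)
difference set `D` of two positive-support functions `a`, `b` of the same length `L`,
and extending `a` by `e` and `b` by `el` at `k₀`, yields positive-support functions
`a'`, `b'` of the same lengths whose maxdiff exists and equals `k₀`. -/
theorem insert_point_maxdiff {I I' E : Type*} [LinearOrder I] [LinearOrder I']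
    (z : I) (bot el e : E)
    (hbe : e ≠ bot) (hee : e ≠ el) (helb : el ≠ bot)
    (a b : I → E) (L : I)
    (ha : IsPosSupportAt z bot a L) (hb : IsPosSupportAt z bot b L)
    (hinf : {i : I | a i ≠ b i}.Infinite)
    (hnomax : ∀ d, a d ≠ b d → ∃ d', a d' ≠ b d' ∧ d < d')
    (μ : I ↪o I') (k₀ : I')
    (hk₀ : k₀ ∉ Set.range μ)
    (hbelow : ∀ i : I, (∃ d, a d ≠ b d ∧ i ≤ d) → μ i < k₀)
    (habove : ∀ i : I, ¬ (∃ d, a d ≠ b d ∧ i ≤ d) → k₀ < μ i)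
    (hcover : ∀ j : I', j = k₀ ∨ ∃ i : I, j = μ i)
    (a' b' : I' → E)
    (ha'μ : ∀ i : I, a' (μ i) = a i) (ha'k : a' k₀ = e)
    (hb'μ : ∀ i : I, b' (μ i) = b i) (hb'k : b' k₀ = el) :
    IsPosSupportAt (μ z) bot a' (μ L) ∧ IsPosSupportAt (μ z) bot b' (μ L) ∧
    IsGreatest {j : I' | a' j ≠ b' j} k₀ := by
  obtain ⟨d, hd⟩ := hinf.nonempty
  -- every difference point lies in [z, L]
  have hdiffL : ∀ d, a d ≠ b d → z ≤ d ∧ d ≤ L := by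
    intro d hd
    rcases eq_or_ne (a d) bot with h | h
    · exact (hb.2 d).1 (fun hb' => hd (h.trans hb'.symm))
    · exact (ha.2 d).1 h
  have hzk : μ z < k₀ := hbelow z ⟨d, hd, (hdiffL d hd).1⟩
  have hkL : k₀ < μ L := by
    apply habove L
    rintro ⟨d', hd', hLd'⟩
    obtain ⟨d'', hd'', hlt⟩ := hnomax d' hd'
    exact absurd ((hdiffL d'' hd'').2) (not_le.2 (lt_of_le_of_lt hLd' hlt))
  have hsupp : ∀ (c : I → E) (c' : I' → E), (∀ j, c j ≠ bot ↔ z ≤ j ∧ j ≤ L) →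
      (∀ i, c' (μ i) = c i) → c' k₀ ≠ bot →
      IsPosSupportAt (μ z) bot c' (μ L) := by
    intro c c' hc hcμ hck
    refine ⟨μ.monotone ha.1, fun j => ?_⟩
    rcases hcover j with rfl | ⟨i, rfl⟩
    · simp [hck, hzk.le, hkL.le]
    · rw [hcμ]
      simp [hc i, μ.le_iff_le]
  refine ⟨hsupp a a' ha.2 ha'μ (by simpa [ha'k] using hbe),
    hsupp b b' hb.2 hb'μ (by simpa [hb'k] using helb), ?_, ?_⟩
  · simp [Set.mem_setOf_eq, ha'k, hb'k, hee]
  · intro j hj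
    rcases hcover j with rfl | ⟨i, rfl⟩
    · exact le_rfl
    · rw [Set.mem_setOf_eq, ha'μ, hb'μ] at hj
      exact (hbelow i ⟨i, hj, le_rfl⟩).le
end
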